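/- arXiv:1712.08004 — 2 statements merged into one kernel-verified Lean document; each statement's English description precedes it below -/
import Mathlib

section
/- Let K be a field of characteristic 0 and let K⟨x⟩† be the ring of power series Σ a_n x^n over K (with non-archimedean absolute value from a complete DVR) satisfying |a_n| ≤ C|π|^{αn} for some C, α > 0. Let d: K⟨x⟩† → K⟨x⟩† be the derivative and i the integration map i(Σ a_n x^n) = Σ (a_n/(n+1))x^{n+1}. Then d ∘ i = id and i ∘ d = id − P₀, where P₀(Σ a_n x^n) = a₀. Consequently the kernel of the evaluation-at-0 map on the two-term de Rham complex K⟨x⟩† →^d K⟨x⟩†·dx is contractible. -/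
open scoped Classical

section Helpers

private lemma log_le_linear' (δ : ℝ) (hδ : 0 < δ) (x : ℝ) (hx : 1 ≤ x) :
    Real.log x ≤ δ * x + 1/δ := by
  have hx0 : (0:ℝ) < x := by linarith
  set s := Real.sqrt x with hsdef
  have hs : s ^ 2 = x := Real.sq_sqrt hx0.le
  have hs0 : 0 < s := Real.sqrt_pos.mpr hx0
  have h1 : Real.log x = 2 * Real.log s := by
    rw [hsdef, Real.log_sqrt hx0.le]; ring
  have h2 : Real.log s ≤ s - 1 := Real.log_le_sub_one_of_pos hs0
  have h3 : δ * (1/δ) = 1 := by field_simp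
  have key : δ * (2 * s - 2) ≤ δ * (δ * s ^ 2 + 1/δ) := by
    nlinarith [sq_nonneg (δ * s - 1)]
  have h4 : 2 * s - 2 ≤ δ * s ^ 2 + 1/δ := le_of_mul_le_mul_left key hδ
  have hx2 : δ * s ^ 2 = δ * x := by rw [hs]
  linarith

private lemma rpow_calc' (ε C : ℝ) (hε0 : 0 < ε) (hε1 : ε < 1) (hC : 0 < C)
    (t s α K₀ x : ℝ) (hα : 0 < α) (hK : 0 ≤ K₀) (hx : 1 ≤ x)
    (ht : ε ^ t ≤ C * ε ^ (α * (x - 1)))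
    (hs : s ≤ α/4 * x + K₀) :
    ε ^ (t - s) ≤ (C * ε ^ (-(α + K₀))) * ε ^ (α/2 * x) := by
  have e1 : ε ^ (t - s) = ε ^ t * ε ^ (-s) := by
    rw [← Real.rpow_add hε0]; ring_nf
  have e2 : ε ^ (-s) ≤ ε ^ (-(α/4*x + K₀)) :=
    Real.rpow_le_rpow_of_exponent_ge hε0 hε1.le (by linarith)
  have e3 : ε ^ (t - s) ≤ (C * ε ^ (α * (x-1))) * ε ^ (-(α/4*x + K₀)) := by
    rw [e1]
    exact mul_le_mul ht e2 (Real.rpow_nonneg hε0.le _) (by positivity)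
  have e4 : (C * ε ^ (α * (x-1))) * ε ^ (-(α/4*x + K₀))
      = C * ε ^ (α * (x-1) - (α/4*x + K₀)) := by
    rw [mul_assoc, ← Real.rpow_add hε0]; ring_nf
  have e5 : ε ^ (α * (x-1) - (α/4*x + K₀)) ≤ ε ^ (α/2 * x - (α + K₀)) :=
    Real.rpow_le_rpow_of_exponent_ge hε0 hε1.le (by nlinarith)
  have e6 : ε ^ (α/2 * x - (α + K₀)) = ε ^ (-(α + K₀)) * ε ^ (α/2 * x) := by
    rw [← Real.rpow_add hε0]; ring_nf
  calc ε ^ (t - s) ≤ (C * ε ^ (α * (x-1))) * ε ^ (-(α/4*x + K₀)) := e3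
    _ = C * ε ^ (α * (x-1) - (α/4*x + K₀)) := e4
    _ ≤ C * ε ^ (α/2 * x - (α + K₀)) := mul_le_mul_of_nonneg_left e5 hC.le
    _ = (C * ε ^ (-(α + K₀))) * ε ^ (α/2 * x) := by rw [e6]; ring

variable {V : Type*} [CommRing V] [IsDomain V] [IsDiscreteValuationRing V]
  {π : V} (hπ : Irreducible π)
  {K : Type*} [Field K] [CharZero K] [Algebra V K] [IsFractionRing V K]

include hπ

private lemma congr_exp' (u u' : Vˣ) (s r : ℤ) (hsr : s ≤ r)
    (h : algebraMap V K u * (algebraMap V K π) ^ s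
       = algebraMap V K u' * (algebraMap V K π) ^ r) : s = r := by
  have hinj : Function.Injective (algebraMap V K) := IsFractionRing.injective V K
  have hπ0 : π ≠ 0 := hπ.ne_zero
  have hπK : (algebraMap V K) π ≠ 0 := fun h0 => hπ0 (hinj (by simpa using h0))
  set k : ℕ := (r - s).toNat with hk
  have hks : (k : ℤ) = r - s := Int.toNat_of_nonneg (by omega)
  have h2 : (algebraMap V K) ↑u = algebraMap V K u' * (algebraMap V K π) ^ (r - s) := by
    have hzs : (algebraMap V K π) ^ s ≠ 0 := zpow_ne_zero _ hπK
    rw [zpow_sub₀ hπK]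
    rw [eq_comm, mul_div_assoc', div_eq_iff hzs, eq_comm]
    exact h
  rw [← hks, zpow_natCast, ← map_pow, ← map_mul] at h2
  have h3 : (u : V) = ↑u' * π ^ k := hinj h2
  rcases Nat.eq_zero_or_pos k with h0 | h0
  · omega
  · exfalso
    apply hπ.not_isUnit
    have hpk : π ^ k = π ^ (k-1) * π := by
      rw [← pow_succ]; congr 1; omega
    have hdvd : π ∣ (u : V) := ⟨↑u' * π ^ (k - 1), by rw [h3, hpk]; ring⟩
    exact isUnit_of_dvd_unit hdvd u.isUnit

variable (ν : K → ℤ)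
  (hν : ∀ x : K, x ≠ 0 → ∃ u : Vˣ,
    x = algebraMap V K u * (algebraMap V K π) ^ (ν x))

include hν

private lemma nu_unique' {x : K} (hx : x ≠ 0) (u : Vˣ) (m : ℤ)
    (hxe : x = algebraMap V K u * (algebraMap V K π) ^ m) : ν x = m := by
  obtain ⟨u₀, hu₀⟩ := hν x hx
  rcases le_total (ν x) m with h | h
  · exact congr_exp' hπ u₀ u _ _ h (by rw [← hu₀, ← hxe])
  · exact (congr_exp' hπ u u₀ _ _ h (by rw [← hxe, ← hu₀])).symm

private lemma nu_mul' {x y : K} (hx : x ≠ 0) (hy : y ≠ 0) : ν (x * y) = ν x + ν y := by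
  have hinj : Function.Injective (algebraMap V K) := IsFractionRing.injective V K
  have hπK : (algebraMap V K) π ≠ 0 := fun h0 => hπ.ne_zero (hinj (by simpa using h0))
  obtain ⟨u, hu⟩ := hν x hx
  obtain ⟨w, hw⟩ := hν y hy
  refine nu_unique' hπ ν hν (mul_ne_zero hx hy) (u * w) (ν x + ν y) ?_
  conv_lhs => rw [hu, hw]
  rw [Units.val_mul, map_mul, zpow_add₀ hπK]
  ring

private lemma nu_algebraMap' {v : V} (hv : v ≠ 0) :
    ∃ k : ℕ, ν (algebraMap V K v) = k ∧ ((0:ℤ) < k → π ∣ v) := by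
  have hinj : Function.Injective (algebraMap V K) := IsFractionRing.injective V K
  obtain ⟨k, u, hku⟩ := IsDiscreteValuationRing.eq_unit_mul_pow_irreducible hv hπ
  have hvK : algebraMap V K v ≠ 0 := fun h0 => hv (hinj (by simpa using h0))
  refine ⟨k, nu_unique' hπ ν hν hvK u k ?_, ?_⟩
  · rw [hku, map_mul, map_pow, zpow_natCast]
  · intro hk
    rw [hku, show k = (k-1)+1 from by omega]
    exact ⟨↑u * π ^ (k-1), by ring⟩

end Helpers

/-- Let `K` be a characteristic-zero field, fraction field of a complete discrete
valuation ring `V` with uniformizer `π`, valuation `ν`, and absolute value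
`|x| = ε ^ ν x` with `0 < ε < 1` (so `|π| = ε`).  Let `D ⊆ K^ℕ` be the coefficient
sequences of the weakly completed polynomial ring `K⟨x⟩†`, i.e. those with
`|aₙ| ≤ C |π|^(α n)` for some `C, α > 0`.  For the derivative `d` and the integration
map `i` (in coefficients: `(d a) n = (n+1) a_{n+1}`, `(i a) 0 = 0`,
`(i a) n = a_{n-1}/n`), one has `d ∘ i = id` and `i ∘ d = id - P₀` where `P₀` keeps the
constant term; moreover `d` and `i` preserve `D`.  Consequently the kernel of the
evaluation-at-0 map on the two-term de Rham complex `K⟨x⟩† → K⟨x⟩†·dx` is contractible: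
`i ∘ d = id` on sequences with vanishing constant term. -/
theorem dagger_deRham_contractible (V : Type*) [CommRing V] [IsDomain V]
    [IsDiscreteValuationRing V] (π : V) (hπ : Irreducible π)
    [IsAdicComplete (Ideal.span {π}) V]
    (K : Type*) [Field K] [CharZero K] [Algebra V K] [IsFractionRing V K]
    (ν : K → ℤ)
    (hν : ∀ x : K, x ≠ 0 → ∃ u : Vˣ,
      x = algebraMap V K u * (algebraMap V K π) ^ (ν x))
    (hνπ : ν (algebraMap V K π) = 1)
    (ε : ℝ) (hε0 : 0 < ε) (hε1 : ε < 1)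
    (D : Set (ℕ → K))
    (hD : D = {a : ℕ → K | ∃ C > (0 : ℝ), ∃ α > (0 : ℝ), ∀ n : ℕ,
      (if a n = 0 then (0 : ℝ) else ε ^ ν (a n)) ≤ C * ε ^ (α * n)})
    (d i P₀ : (ℕ → K) → (ℕ → K))
    (hd : ∀ a n, d a n = ((n : K) + 1) * a (n + 1))
    (hi : ∀ a n, i a n = if n = 0 then 0 else a (n - 1) / (n : K))
    (hP₀ : ∀ a n, P₀ a n = if n = 0 then a 0 else 0) :
    (∀ a, d (i a) = a) ∧
    (∀ a, i (d a) = a - P₀ a) ∧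
    (∀ a ∈ D, i a ∈ D) ∧ (∀ a ∈ D, d a ∈ D) ∧
    (∀ a ∈ D, a 0 = 0 → i (d a) = a) := by
  have hinj : Function.Injective (algebraMap V K) := IsFractionRing.injective V K
  -- casts of naturals into V are nonzero
  have hcastV : ∀ n : ℕ, n ≠ 0 → ((n:V) ≠ 0) := by
    intro n hn h0
    have h1 : ((n:ℕ):K) = 0 := by
      rw [← map_natCast (algebraMap V K) n, h0, map_zero]
    exact (Nat.cast_ne_zero.mpr hn) h1
  have hνnat : ∀ n : ℕ, n ≠ 0 → ∃ k : ℕ, ν ((n:ℕ):K) = k ∧ ((0:ℤ) < k → π ∣ (n:V)) := by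
    intro n hn
    have h := nu_algebraMap' hπ ν hν (hcastV n hn)
    rwa [map_natCast] at h
  have hνnat0 : ∀ n : ℕ, n ≠ 0 → 0 ≤ ν ((n:ℕ):K) := by
    intro n hn
    obtain ⟨k, hk, -⟩ := hνnat n hn
    rw [hk]; exact_mod_cast Nat.zero_le k
  -- at most one prime has positive valuation
  have honly : ∀ p q : ℕ, p.Prime → q.Prime → p ≠ q →
      0 < ν ((p:ℕ):K) → 0 < ν ((q:ℕ):K) → False := by
    intro p q hp hq hpq h1 h2
    obtain ⟨kp, hkp, hdp⟩ := hνnat p hp.pos.ne'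
    obtain ⟨kq, hkq, hdq⟩ := hνnat q hq.pos.ne'
    have d1 : π ∣ (p:V) := hdp (by rw [← hkp]; exact h1)
    have d2 : π ∣ (q:V) := hdq (by rw [← hkq]; exact h2)
    have hco : IsCoprime (p:ℤ) (q:ℤ) := by
      rw [Int.isCoprime_iff_gcd_eq_one]
      exact_mod_cast (Nat.coprime_primes hp hq).mpr hpq
    obtain ⟨x, y, hxy⟩ := hco
    have h1V : (x:V) * (p:V) + (y:V) * (q:V) = 1 := by
      have h2V := congrArg (fun z : ℤ => (z:V)) hxy
      push_cast at h2V
      exact h2V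
    have hdvd1 : π ∣ (1:V) := by
      rw [← h1V]; exact dvd_add (d1.mul_left _) (d2.mul_left _)
    exact hπ.not_isUnit (isUnit_of_dvd_one hdvd1)
  -- uniform bound M on ν of primes
  obtain ⟨M, hM0, hMq⟩ : ∃ M : ℤ, 0 ≤ M ∧ ∀ q : ℕ, q.Prime → ν ((q:ℕ):K) ≤ M := by
    by_cases hex : ∃ p : ℕ, p.Prime ∧ 0 < ν ((p:ℕ):K)
    · obtain ⟨p, hp, hpos⟩ := hex
      refine ⟨ν ((p:ℕ):K), hpos.le, fun q hq => ?_⟩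
      by_cases hq0 : 0 < ν ((q:ℕ):K)
      · rcases eq_or_ne q p with rfl | hne
        · exact le_refl _
        · exact absurd (honly q p hq hp hne hq0 hpos) (fun h => h)
      · linarith [le_of_not_gt hq0]
    · push_neg at hex
      exact ⟨0, le_refl 0, fun q hq => hex q hq⟩
  have hνone : ν (1:K) = 0 := by
    have h := nu_mul' hπ ν hν (one_ne_zero (α := K)) one_ne_zero
    rw [mul_one] at h; omega
  -- logarithmic bound on ν of naturals
  have hlog : ∀ n : ℕ, 1 ≤ n → ν ((n:ℕ):K) ≤ M * (Nat.log 2 n : ℤ) := by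
    intro n
    induction n using Nat.strong_induction_on with
    | _ n ih =>
      intro hn
      rcases eq_or_lt_of_le hn with h1 | h2
      · rw [← h1]; simpa using hνone.le
      · have hn1 : n ≠ 1 := by omega
        set q := n.minFac with hqdef
        have hqp : q.Prime := Nat.minFac_prime hn1
        set m := n / q with hmdef
        have hqm : q * m = n := Nat.mul_div_cancel' n.minFac_dvd
        have hm1 : 1 ≤ m := Nat.div_pos (Nat.minFac_le (by omega)) (Nat.minFac_pos n)
        have hmn : m < n := Nat.div_lt_self (by omega) hqp.one_lt
        have hcast : ((n:ℕ):K) = ((q:ℕ):K) * ((m:ℕ):K) := by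
          rw [← hqm]; push_cast; ring
        have hq0 : ((q:ℕ):K) ≠ 0 := Nat.cast_ne_zero.mpr hqp.pos.ne'
        have hm0 : ((m:ℕ):K) ≠ 0 := Nat.cast_ne_zero.mpr (by omega)
        have hsplit : ν ((n:ℕ):K) = ν ((q:ℕ):K) + ν ((m:ℕ):K) := by
          rw [hcast]; exact nu_mul' hπ ν hν hq0 hm0
        have hihm := ih m hmn hm1
        have hqM := hMq q hqp
        have hlogs : (Nat.log 2 m : ℤ) + 1 ≤ (Nat.log 2 n : ℤ) := by
          have e1 : Nat.log 2 (m * 2) = Nat.log 2 m + 1 :=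
            Nat.log_mul_base (by norm_num) (by omega)
          have e2 : m * 2 ≤ n := by
            calc m * 2 = 2 * m := mul_comm m 2
              _ ≤ q * m := Nat.mul_le_mul_right m hqp.two_le
              _ = n := hqm
          have e3 := Nat.log_mono_right e2 (b := 2)
          rw [e1] at e3
          exact_mod_cast e3
        have hmul := mul_le_mul_of_nonneg_left hlogs hM0
        nlinarith [hihm, hqM]
  have hlog2 : (0:ℝ) < Real.log 2 := Real.log_pos (by norm_num)
  have hM0R : (0:ℝ) ≤ (M:ℝ) := by exact_mod_cast hM0
  have hνlogR : ∀ n : ℕ, 1 ≤ n → (ν ((n:ℕ):K) : ℝ) * Real.log 2 ≤ (M:ℝ) * Real.log n := by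
    intro n hn
    have h1 : (ν ((n:ℕ):K) : ℝ) ≤ (M:ℝ) * (Nat.log 2 n : ℝ) := by
      exact_mod_cast hlog n hn
    have h2 : (Nat.log 2 n : ℝ) * Real.log 2 ≤ Real.log n := by
      rw [← Real.log_pow]
      exact Real.log_le_log (by positivity)
        (by exact_mod_cast Nat.pow_log_le_self 2 (by omega))
    calc (ν ((n:ℕ):K) : ℝ) * Real.log 2 ≤ ((M:ℝ) * (Nat.log 2 n : ℝ)) * Real.log 2 :=
          mul_le_mul_of_nonneg_right h1 hlog2.le
      _ = (M:ℝ) * ((Nat.log 2 n : ℝ) * Real.log 2) := by ring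
      _ ≤ (M:ℝ) * Real.log n := mul_le_mul_of_nonneg_left h2 hM0R
  -- i preserves D
  have hiD : ∀ a ∈ D, i a ∈ D := by
    intro a ha
    rw [hD] at ha ⊢
    obtain ⟨C, hC, α, hα, hb⟩ := ha
    set δ : ℝ := α * Real.log 2 / (4 * ((M:ℝ) + 1)) with hδdef
    have hδ : 0 < δ := by
      apply div_pos (by positivity) (by positivity)
    set K₀ : ℝ := (M:ℝ) / Real.log 2 * (1/δ) with hK₀def
    have hK₀ : 0 ≤ K₀ := by positivity
    have hνn : ∀ n : ℕ, 1 ≤ n → (ν ((n:ℕ):K) : ℝ) ≤ α/4 * n + K₀ := by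
      intro n hn
      have h1 := hνlogR n hn
      have h2 := log_le_linear' δ hδ n (by exact_mod_cast hn)
      have h4 : (M:ℝ) * Real.log n ≤ (M:ℝ) * (δ * n + 1/δ) :=
        mul_le_mul_of_nonneg_left h2 hM0R
      have h6 : (ν ((n:ℕ):K):ℝ) ≤ (M:ℝ) * (δ * n + 1/δ) / Real.log 2 := by
        rw [le_div_iff₀ hlog2]; linarith
      have h7 : (M:ℝ) * (δ * n + 1/δ) / Real.log 2 = ((M:ℝ)/Real.log 2 * δ) * n + K₀ := by
        rw [hK₀def]; field_simp
      rw [h7] at h6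
      have h8 : (M:ℝ)/Real.log 2 * δ ≤ α/4 := by
        rw [hδdef]
        have hMM : (M:ℝ)/((M:ℝ)+1) ≤ 1 := by
          rw [div_le_one (by linarith)]; linarith
        have expand : (M:ℝ)/Real.log 2 * (α * Real.log 2/(4*((M:ℝ)+1)))
            = α/4 * ((M:ℝ)/((M:ℝ)+1)) := by
          field_simp
        rw [expand]; nlinarith
      have h9 := mul_le_mul_of_nonneg_right h8 (by positivity : (0:ℝ) ≤ (n:ℝ))
      linarith
    refine ⟨C * ε ^ (-(α + K₀)), by positivity, α/2, by linarith, fun n => ?_⟩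
    match n with
    | 0 =>
      have h0 : i a 0 = 0 := by rw [hi]; simp
      rw [if_pos h0]
      positivity
    | (m+1) =>
      have hne : (m+1:ℕ) ≠ 0 := Nat.succ_ne_zero m
      have hia : i a (m+1) = a m / (((m+1:ℕ)):K) := by
        rw [hi, if_neg hne]
        norm_num
      by_cases ham : a m = 0
      · have h0 : i a (m+1) = 0 := by rw [hia, ham, zero_div]
        rw [if_pos h0]
        positivity
      · have hm1K : (((m+1:ℕ)):K) ≠ 0 := Nat.cast_ne_zero.mpr hne
        have hianz : i a (m+1) ≠ 0 := by rw [hia]; exact div_ne_zero ham hm1K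
        rw [if_neg hianz]
        have hrec : a m = i a (m+1) * (((m+1:ℕ)):K) := by
          rw [hia, div_mul_cancel₀ _ hm1K]
        have hνi : ν (a m) = ν (i a (m+1)) + ν (((m+1:ℕ)):K) := by
          conv_lhs => rw [hrec]
          exact nu_mul' hπ ν hν hianz hm1K
        have hbm := hb m
        rw [if_neg ham] at hbm
        have ht : (ε : ℝ) ^ ((ν (a m) : ℝ)) ≤ C * ε ^ (α * (((m+1:ℕ):ℝ) - 1)) := by
          rw [Real.rpow_intCast]
          convert hbm using 2
          push_cast; ring
        have hs : (ν (((m+1:ℕ)):K) : ℝ) ≤ α/4 * ((m+1:ℕ):ℝ) + K₀ :=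
          hνn (m+1) (Nat.le_add_left 1 m)
        have hmain := rpow_calc' ε C hε0 hε1 hC (ν (a m) : ℝ) (ν (((m+1:ℕ)):K) : ℝ)
          α K₀ ((m+1:ℕ):ℝ) hα hK₀ (by exact_mod_cast Nat.le_add_left 1 m) ht hs
        have hνival : ν (i a (m+1)) = ν (a m) - ν (((m+1:ℕ)):K) := by omega
        have hconv : (ε ^ (ν (i a (m+1))) : ℝ)
            = ε ^ ((ν (a m) : ℝ) - (ν (((m+1:ℕ)):K) : ℝ)) := by
          rw [hνival, ← Real.rpow_intCast ε (ν (a m) - ν (((m+1:ℕ)):K))]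
          congr 1
          push_cast; ring
        rw [hconv]
        exact hmain
  -- d preserves D
  have hdD : ∀ a ∈ D, d a ∈ D := by
    intro a ha
    rw [hD] at ha ⊢
    obtain ⟨C, hC, α, hα, hb⟩ := ha
    refine ⟨C, hC, α, hα, fun n => ?_⟩
    by_cases hz : d a n = 0
    · rw [if_pos hz]; positivity
    · rw [if_neg hz]
      have hda := hd a n
      have hcast : ((n : K) + 1) = (((n+1:ℕ)):K) := by push_cast; ring
      have hn1 : (((n+1:ℕ)):K) ≠ 0 := Nat.cast_ne_zero.mpr (Nat.succ_ne_zero n)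
      have ha1 : a (n+1) ≠ 0 := by
        intro h0; apply hz; rw [hda, h0, mul_zero]
      have hνd : ν (d a n) = ν (((n+1:ℕ)):K) + ν (a (n+1)) := by
        rw [hda, hcast]; exact nu_mul' hπ ν hν hn1 ha1
      have hνpos : 0 ≤ ν (((n+1:ℕ)):K) := hνnat0 (n+1) (Nat.succ_ne_zero n)
      have hbn := hb (n+1)
      rw [if_neg ha1] at hbn
      calc (ε ^ ν (d a n) : ℝ) = ε ^ ((ν (d a n) : ℝ)) := (Real.rpow_intCast ε _).symm
        _ ≤ ε ^ ((ν (a (n+1)) : ℝ)) := by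
            apply Real.rpow_le_rpow_of_exponent_ge hε0 hε1.le
            exact_mod_cast (by omega : ν (a (n+1)) ≤ ν (d a n))
        _ = ε ^ (ν (a (n+1))) := Real.rpow_intCast ε _
        _ ≤ C * ε ^ (α * ((n+1:ℕ):ℝ)) := hbn
        _ ≤ C * ε ^ (α * (n:ℝ)) := by
            apply mul_le_mul_of_nonneg_left _ hC.le
            apply Real.rpow_le_rpow_of_exponent_ge hε0 hε1.le
            push_cast
            nlinarith
  -- d ∘ i = id
  have hid1 : ∀ a, d (i a) = a := by
    intro a
    funext n
    rw [hd, hi, if_neg (Nat.succ_ne_zero n)]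
    have hne : ((n : K) + 1) ≠ 0 := by
      have h1 : (((n+1:ℕ)):K) ≠ 0 := Nat.cast_ne_zero.mpr (Nat.succ_ne_zero n)
      push_cast at h1
      exact h1
    rw [Nat.add_sub_cancel]
    push_cast
    field_simp
  -- i ∘ d = id - P₀
  have hid2 : ∀ a, i (d a) = a - P₀ a := by
    intro a
    funext n
    match n with
    | 0 =>
      rw [hi, if_pos rfl, Pi.sub_apply, hP₀, if_pos rfl]
      ring
    | (m+1) =>
      rw [hi, if_neg (Nat.succ_ne_zero m), Pi.sub_apply, hP₀,
        if_neg (Nat.succ_ne_zero m), Nat.add_sub_cancel, hd]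
      have hne : (((m+1:ℕ)):K) ≠ 0 := Nat.cast_ne_zero.mpr (Nat.succ_ne_zero m)
      push_cast at hne ⊢
      field_simp
      ring
  refine ⟨hid1, hid2, hiD, hdD, ?_⟩
  intro a ha h0
  rw [hid2]
  funext n
  rw [Pi.sub_apply, hP₀]
  match n with
  | 0 => simp [h0]
  | (m+1) => simp
end

section
/- Let V be a complete discrete valuation ring with uniformizer π, and let P = V[x₁,…,x_n]. Let L be the V-submodule generated by 1, x₁,…,x_n and set M_j = L^j. Then the π-adic completion of the submodule M_j^{(π)} = Σ_{k≥0} π^k M_j^{k+1} of P, viewed inside the π-adic completion P̂ of P, consists exactly of the power series Σ_α λ_α x^α with λ_α ∈ V such that |π λ_α| ≤ |π|^{|α|/j} for all multi-indices α and |λ_α|/|π|^{|α|/j} → 0 as |α| → ∞. -/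
open scoped Pointwise

namespace DaggerProofAux

open MvPolynomial

/-! ### Nat helpers -/

lemma nat_le_div_succ_mul {a b : ℕ} (hb : 0 < b) : a ≤ b * ((a - 1) / b + 1) := by
  rw [mul_comm]
  have h := Nat.lt_div_mul_add (a := a - 1) hb
  have e : ((a - 1) / b + 1) * b = (a - 1) / b * b + b := Nat.succ_mul _ _
  rw [e]
  exact Nat.le_of_pred_lt h

lemma nat_div_le_of_le {a b k : ℕ} (hb : 0 < b) (h : a ≤ b * (k + 1)) : (a - 1) / b ≤ k := by
  have h1 : a - 1 < (k + 1) * b := by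
    rcases Nat.eq_zero_or_pos a with rfl | ha
    · simpa using Nat.mul_pos (Nat.succ_pos k) hb
    · have h2 : a - 1 < a := by omega
      have h3 : a ≤ (k + 1) * b := by rw [mul_comm]; exact h
      exact lt_of_lt_of_le h2 h3
  exact Nat.lt_succ_iff.mp ((Nat.div_lt_iff_lt_mul hb).mpr h1)

lemma nat_root_bound {a b : ℕ} (hb : 0 < b) (ha : 0 < a) :
    b * ((a - 1) / b + 1) < a + b := by
  have h1 : b * ((a - 1) / b) ≤ a - 1 := by
    rw [mul_comm]; exact Nat.div_mul_le_self _ _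
  have h2 : b * ((a - 1) / b + 1) = b * ((a - 1) / b) + b := by ring
  rw [h2]
  exact Nat.add_lt_add_right (Nat.lt_of_le_of_lt h1 (by omega)) b

lemma nat_root_bound' {a b m : ℕ} (hb : 0 < b) (ha : 0 < a) :
    b * (m + (a - 1) / b + 1) < (a + m * b) + b := by
  have h1 : b * ((a - 1) / b) ≤ a - 1 := by
    rw [mul_comm]; exact Nat.div_mul_le_self _ _
  have h2 : b * (m + (a - 1) / b + 1) = b * ((a - 1) / b) + (m * b + b) := by ring
  have h3 : (a + m * b) + b = a + (m * b + b) := by ring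
  rw [h2, h3]
  exact Nat.add_lt_add_right (Nat.lt_of_le_of_lt h1 (by omega)) _

/-! ### root extraction in a DVR -/

variable {V : Type*} [CommRing V] [IsDomain V] [IsDiscreteValuationRing V]

lemma root_dvd {π x : V} (hπ : Irreducible π) {jj k a : ℕ}
    (hk : jj * k < a + jj) (h : π ^ a ∣ x ^ jj) : π ^ k ∣ x := by
  rcases eq_or_ne x 0 with rfl | hx
  · exact dvd_zero _
  obtain ⟨t, u, rfl⟩ := IsDiscreteValuationRing.eq_unit_mul_pow_irreducible hx hπ
  have hdvd : π ^ a ∣ π ^ (t * jj) := by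
    have e : ((u : V) * π ^ t) ^ jj = (u : V) ^ jj * π ^ (t * jj) := by
      rw [mul_pow, ← pow_mul]
    rw [e] at h
    exact (Units.dvd_mul_left (u := u ^ jj)).mp h
  have hle : a ≤ t * jj := by
    by_contra hlt
    push_neg at hlt
    have h2 : π ^ (t * jj) * π ∣ π ^ (t * jj) * 1 := by
      rw [mul_one]
      calc π ^ (t * jj) * π = π ^ (t * jj + 1) := (pow_succ π _).symm
        _ ∣ π ^ a := pow_dvd_pow π (by omega)
        _ ∣ π ^ (t * jj) := hdvd
    have : π ∣ 1 := (mul_dvd_mul_iff_left (pow_ne_zero _ hπ.ne_zero)).mp h2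
    exact hπ.not_isUnit (isUnit_of_dvd_one this)
  have h4 : jj * k < jj * (t + 1) := by
    calc jj * k < a + jj := hk
      _ ≤ t * jj + jj := Nat.add_le_add_right hle jj
      _ = jj * (t + 1) := by ring
  have hkt : k ≤ t := Nat.lt_succ_iff.mp (Nat.lt_of_mul_lt_mul_left h4)
  exact (pow_dvd_pow π hkt).trans (Dvd.intro_left _ rfl)

/-! ### Finsupp / polynomial helpers -/

lemma sum_support_eq {n : ℕ} (α : Fin n →₀ ℕ) : ∑ i ∈ α.support, α i = ∑ i, α i :=
  Finset.sum_subset (Finset.subset_univ _) fun _ _ hi => Finsupp.notMem_support_iff.mp hi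

lemma coeff_sum_monomial {n : ℕ} (s : Finset (Fin n →₀ ℕ)) (f : (Fin n →₀ ℕ) → V)
    (β : Fin n →₀ ℕ) :
    MvPolynomial.coeff β (∑ α ∈ s, monomial α (f α)) = if β ∈ s then f β else 0 := by
  classical
  rw [MvPolynomial.coeff_sum]
  simp only [MvPolynomial.coeff_monomial]
  exact Finset.sum_ite_eq' s β f

/-! ### the submodules `L ^ m` -/

section L

variable {n : ℕ} (L : Submodule V (MvPolynomial (Fin n) V))
  (hL : L = Submodule.span V
    (insert 1 (Set.range (MvPolynomial.X : Fin n → MvPolynomial (Fin n) V))))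

include hL

lemma pow_L_le (m : ℕ) : L ^ m ≤ restrictTotalDegree (Fin n) V m := by
  have hL1 : L ≤ restrictTotalDegree (Fin n) V 1 := by
    rw [hL, Submodule.span_le]
    rintro p (rfl | ⟨i, rfl⟩)
    · simp [SetLike.mem_coe, mem_restrictTotalDegree, totalDegree_one]
    · simp [SetLike.mem_coe, mem_restrictTotalDegree, totalDegree_X]
  induction m with
  | zero =>
    rw [pow_zero, Submodule.one_eq_span, Submodule.span_le]
    rintro p rfl
    simp [SetLike.mem_coe, mem_restrictTotalDegree, totalDegree_one]
  | succ m ih =>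
    rw [pow_succ]
    refine Submodule.mul_le.mpr fun a ha b hb => ?_
    rw [mem_restrictTotalDegree]
    calc (a * b).totalDegree ≤ a.totalDegree + b.totalDegree := totalDegree_mul a b
      _ ≤ m + 1 := by
          have hha := ih ha
          have hhb := hL1 hb
          rw [mem_restrictTotalDegree] at hha hhb
          exact Nat.add_le_add hha hhb

lemma monomial_mem_pow_L (m : ℕ) (α : Fin n →₀ ℕ) (c : V) (hα : (∑ i, α i) ≤ m) :
    monomial α c ∈ L ^ m := by
  have h1 : (1 : MvPolynomial (Fin n) V) ∈ L := by
    rw [hL]; exact Submodule.subset_span (Set.mem_insert _ _)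
  induction m generalizing α c with
  | zero =>
    have hα0 : α = 0 := by
      ext i
      have hz : ∑ i', α i' = 0 := Nat.le_zero.mp hα
      exact Finset.sum_eq_zero_iff.mp hz i (Finset.mem_univ i)
    subst hα0
    rw [pow_zero, Submodule.one_eq_span]
    have : monomial (0 : Fin n →₀ ℕ) c = c • (1 : MvPolynomial (Fin n) V) := by
      rw [monomial_zero', smul_eq_C_mul, mul_one]
    rw [this]
    exact Submodule.smul_mem _ _ (Submodule.mem_span_singleton_self _)
  | succ m ih =>
    by_cases h : (∑ i, α i) ≤ m
    · have := Submodule.mul_mem_mul (ih α c h) h1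
      rw [mul_one] at this
      rw [pow_succ]
      exact this
    · have hsum : ∑ i, α i = m + 1 := le_antisymm hα (not_le.1 h)
      obtain ⟨i, hi⟩ : ∃ i, α i ≠ 0 := by
        by_contra hc
        push_neg at hc
        have hz : ∑ i, α i = 0 := Finset.sum_eq_zero fun i _ => hc i
        omega
      set β := α - Finsupp.single i 1 with hβdef
      have hβ : β + Finsupp.single i 1 = α :=
        tsub_add_cancel_of_le (Finsupp.single_le_iff.mpr (Nat.one_le_iff_ne_zero.mpr hi))
      have hssingle : ∑ i', (Finsupp.single i 1 : Fin n →₀ ℕ) i' = 1 := by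
        simp [Finsupp.single_apply]
      have hβsum : (∑ i', β i') ≤ m := by
        have : (∑ i', β i') + (∑ i', (Finsupp.single i 1 : Fin n →₀ ℕ) i') = ∑ i', α i' := by
          rw [← Finset.sum_add_distrib]
          refine Finset.sum_congr rfl fun i' _ => ?_
          rw [← Finsupp.add_apply, hβ]
        omega
      have hX : (MvPolynomial.X i : MvPolynomial (Fin n) V) ∈ L := by
        rw [hL]; exact Submodule.subset_span (Set.mem_insert_iff.mpr (Or.inr ⟨i, rfl⟩))
      have hmul := Submodule.mul_mem_mul (ih β c hβsum) hX
      have : monomial β c * MvPolynomial.X i = monomial α c := by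
        rw [MvPolynomial.X, MvPolynomial.monomial_mul, mul_one, hβ]
      rw [this] at hmul
      rw [pow_succ]
      exact hmul

end L

/-! ### membership in `Mjπ` and its multiples -/

section Mjπ

variable {n j : ℕ} (hj : 0 < j) (π : V)
  (L : Submodule V (MvPolynomial (Fin n) V))
  (hL : L = Submodule.span V
    (insert 1 (Set.range (MvPolynomial.X : Fin n → MvPolynomial (Fin n) V))))
  (Mjπ : Submodule V (MvPolynomial (Fin n) V))
  (hMjπ : Mjπ = ⨆ k : ℕ, π ^ k • (L ^ j) ^ (k + 1))

lemma mem_smul_iff_exists (a : V) (S : Submodule V (MvPolynomial (Fin n) V))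
    (p : MvPolynomial (Fin n) V) : p ∈ a • S ↔ ∃ q ∈ S, a • q = p := by
  rw [← SetLike.mem_coe, Submodule.coe_pointwise_smul]
  exact Set.mem_smul_set

include hj hL hMjπ

lemma mem_Mjπ_iff (p : MvPolynomial (Fin n) V) :
    p ∈ Mjπ ↔ ∀ α : Fin n →₀ ℕ, π ^ (((∑ i, α i) - 1) / j) ∣ MvPolynomial.coeff α p := by
  constructor
  · intro hp
    rw [hMjπ] at hp
    refine Submodule.iSup_induction (motive := fun x =>
      ∀ α : Fin n →₀ ℕ, π ^ (((∑ i, α i) - 1) / j) ∣ MvPolynomial.coeff α x) _ hp ?_ ?_ ?_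
    · intro k x hx α
      rw [mem_smul_iff_exists] at hx
      obtain ⟨q, hq, rfl⟩ := hx
      rw [← pow_mul] at hq
      rw [MvPolynomial.coeff_smul, smul_eq_mul]
      by_cases hd : (∑ i, α i) ≤ j * (k + 1)
      · exact Dvd.dvd.mul_right (pow_dvd_pow π (nat_div_le_of_le hj hd)) _
      · have hq' : q.totalDegree < ∑ i ∈ α.support, α i := by
          rw [sum_support_eq]
          have hdeg := pow_L_le L hL (j * (k + 1)) hq
          rw [mem_restrictTotalDegree] at hdeg
          omega
        rw [coeff_eq_zero_of_totalDegree_lt hq', mul_zero]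
        exact dvd_zero _
    · intro α; simp
    · intro x y hx hy α
      rw [MvPolynomial.coeff_add]
      exact dvd_add (hx α) (hy α)
  · intro h
    have h' : ∀ α : Fin n →₀ ℕ, ∃ c : V,
        MvPolynomial.coeff α p = π ^ (((∑ i, α i) - 1) / j) * c := fun α => h α
    choose f hf using h'
    rw [← MvPolynomial.support_sum_monomial_coeff p]
    refine Submodule.sum_mem _ fun α _ => ?_
    have e : monomial α (MvPolynomial.coeff α p)
        = π ^ (((∑ i, α i) - 1) / j) • monomial α (f α) := by
      rw [MvPolynomial.smul_monomial, smul_eq_mul, ← hf α]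
    rw [e, hMjπ]
    refine Submodule.mem_iSup_of_mem (((∑ i, α i) - 1) / j) ?_
    refine Submodule.smul_mem_pointwise_smul _ _ _ ?_
    rw [← pow_mul]
    exact monomial_mem_pow_L L hL _ α (f α) (nat_le_div_succ_mul hj)

lemma mem_smul_Mjπ_iff (m : ℕ) (p : MvPolynomial (Fin n) V) :
    p ∈ π ^ m • Mjπ ↔
      ∀ α : Fin n →₀ ℕ, π ^ (m + ((∑ i, α i) - 1) / j) ∣ MvPolynomial.coeff α p := by
  rw [mem_smul_iff_exists]
  constructor
  · rintro ⟨q, hq, rfl⟩ α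
    rw [MvPolynomial.coeff_smul, smul_eq_mul, pow_add]
    exact mul_dvd_mul_left _ ((mem_Mjπ_iff hj π L hL Mjπ hMjπ q).mp hq α)
  · intro h
    have h' : ∀ α : Fin n →₀ ℕ, ∃ c : V,
        MvPolynomial.coeff α p = π ^ (m + ((∑ i, α i) - 1) / j) * c := fun α => h α
    choose f hf using h'
    refine ⟨∑ α ∈ p.support, monomial α (π ^ (((∑ i, α i) - 1) / j) * f α), ?_, ?_⟩
    · rw [mem_Mjπ_iff hj π L hL Mjπ hMjπ]
      intro α
      rw [coeff_sum_monomial]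
      split
      · exact Dvd.intro _ rfl
      · exact dvd_zero _
    · have e : ∀ α ∈ p.support, π ^ m • monomial α (π ^ (((∑ i, α i) - 1) / j) * f α)
          = monomial α (MvPolynomial.coeff α p) := by
        intro α _
        rw [MvPolynomial.smul_monomial, smul_eq_mul, ← mul_assoc, ← pow_add, ← hf α]
      rw [Finset.smul_sum, Finset.sum_congr rfl e]
      exact MvPolynomial.support_sum_monomial_coeff p

end Mjπ

end DaggerProofAux

open DaggerProofAux

/-- Let `V` be a complete discrete valuation ring with uniformizer `π`, and
`P = V[x₁,…,xₙ]`.  Let `L` be the `V`-submodule generated by `1, x₁, …, xₙ`, `M_j = L^j`,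
and `M_j^{(π)} = Σ_{k≥0} π^k M_j^{k+1}`.  Then the image of the `π`-adic completion of
`M_j^{(π)}` inside the `π`-adic completion `P̂` (power series `z` that are coefficientwise
limits of Cauchy sequences in `M_j^{(π)}`) is exactly the set of power series
`Σ_α λ_α x^α` with `|π λ_α| ≤ |π|^{|α|/j}` for all `α` and `|λ_α|/|π|^{|α|/j} → 0` as
`|α| → ∞`; in divisibility form: `π^{|α|} ∣ (π λ_α)^j`, and for every `m` one has
`π^{|α| + mj} ∣ λ_α^j` for all `α` of sufficiently large total degree. -/
theorem completion_of_dagger_submodule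
    (V : Type*) [CommRing V] [IsDomain V] [IsDiscreteValuationRing V]
    (π : V) (hπ : Irreducible π) [IsAdicComplete (Ideal.span {π}) V]
    (n j : ℕ) (hj : 0 < j)
    (L : Submodule V (MvPolynomial (Fin n) V))
    (hL : L = Submodule.span V
      (insert 1 (Set.range (MvPolynomial.X : Fin n → MvPolynomial (Fin n) V))))
    (Mjπ : Submodule V (MvPolynomial (Fin n) V))
    (hMjπ : Mjπ = ⨆ k : ℕ, π ^ k • (L ^ j) ^ (k + 1)) :
    {z : MvPowerSeries (Fin n) V |
      ∃ w : ℕ → MvPolynomial (Fin n) V,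
        (∀ m, w m ∈ Mjπ) ∧
        (∀ m m' : ℕ, m ≤ m' → w m' - w m ∈ π ^ m • Mjπ) ∧
        (∀ (m : ℕ) (α : Fin n →₀ ℕ),
          MvPowerSeries.coeff α z - MvPolynomial.coeff α (w m) ∈
            Ideal.span {π ^ m})} =
    {z : MvPowerSeries (Fin n) V |
      (∀ α : Fin n →₀ ℕ,
        π ^ (∑ i, α i) ∣ (π * MvPowerSeries.coeff α z) ^ j) ∧
      (∀ m : ℕ, ∃ N : ℕ, ∀ α : Fin n →₀ ℕ, N ≤ ∑ i, α i →
        π ^ ((∑ i, α i) + m * j) ∣ (MvPowerSeries.coeff α z) ^ j)} := by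
    classical
  ext z
  simp only [Set.mem_setOf_eq]
  constructor
  · rintro ⟨w, hw1, hw2, hw3⟩
    constructor
    · intro α
      set dα := ∑ i, α i with hdα
      set kα := (dα - 1) / j with hkα
      have h1 : π ^ kα ∣ MvPolynomial.coeff α (w kα) :=
        (mem_Mjπ_iff hj π L hL Mjπ hMjπ (w kα)).mp (hw1 kα) α
      have h2 : π ^ kα ∣ MvPowerSeries.coeff α z - MvPolynomial.coeff α (w kα) :=
        Ideal.mem_span_singleton.mp (hw3 kα α)
      have h3 : π ^ kα ∣ MvPowerSeries.coeff α z := by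
        have h4 := dvd_add h2 h1
        rwa [sub_add_cancel] at h4
      obtain ⟨c, hc⟩ := h3
      have e : (π * MvPowerSeries.coeff α z) ^ j = π ^ (j * (kα + 1)) * c ^ j := by
        rw [hc]; ring
      rw [e]
      have hdk : dα ≤ j * (kα + 1) := by rw [hkα]; exact nat_le_div_succ_mul hj
      exact Dvd.dvd.mul_right (pow_dvd_pow π hdk) _
    · intro m
      refine ⟨(w (m + 1)).totalDegree + 1, fun α hα => ?_⟩
      set dα := ∑ i, α i with hdα
      set kα := (dα - 1) / j with hkα
      have h0 : MvPolynomial.coeff α (w (m + 1)) = 0 := by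
        apply MvPolynomial.coeff_eq_zero_of_totalDegree_lt
        rw [sum_support_eq]
        omega
      set M := m + 1 + dα with hM
      have hdiff : π ^ (m + 1 + kα) ∣ MvPolynomial.coeff α (w M) := by
        have hmem := hw2 (m + 1) M (by omega)
        have h5 := (mem_smul_Mjπ_iff hj π L hL Mjπ hMjπ (m + 1) _).mp hmem α
        rw [MvPolynomial.coeff_sub, h0, sub_zero] at h5
        rw [← hkα] at h5
        exact h5
      have h2 : π ^ M ∣ MvPowerSeries.coeff α z - MvPolynomial.coeff α (w M) :=
        Ideal.mem_span_singleton.mp (hw3 M α)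
      have h3 : π ^ (m + 1 + kα) ∣ MvPowerSeries.coeff α z := by
        have hkd : kα ≤ dα := le_trans (Nat.div_le_self _ _) (by omega)
        have hMk : m + 1 + kα ≤ M := by omega
        have h4 := dvd_add ((pow_dvd_pow π hMk).trans h2) hdiff
        rwa [sub_add_cancel] at h4
      obtain ⟨c, hc⟩ := h3
      have e : (MvPowerSeries.coeff α z) ^ j = π ^ (j * (m + 1 + kα)) * c ^ j := by
        rw [hc]; ring
      rw [e]
      refine Dvd.dvd.mul_right (pow_dvd_pow π ?_) _
      have h1 : dα ≤ j * (kα + 1) := by rw [hkα]; exact nat_le_div_succ_mul hj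
      calc dα + m * j ≤ j * (kα + 1) + m * j := Nat.add_le_add_right h1 _
        _ = j * (m + 1 + kα) := by ring
  · rintro ⟨hz1, hz2⟩
    choose N hN using hz2
    set D : ℕ → ℕ := fun m => (Finset.range (m + 1)).sup N with hD
    have hDmono : ∀ m m', m ≤ m' → D m ≤ D m' := fun m m' h =>
      Finset.sup_mono (Finset.range_subset_range.mpr (by omega))
    have hND : ∀ m, N m ≤ D m := fun m => Finset.le_sup (Finset.self_mem_range_succ m)
    set c : ℕ → (Fin n →₀ ℕ) := fun m => Finsupp.equivFunOnFinite.symm (fun _ => D m) with hc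
    have hci : ∀ m i, c m i = D m := by intro m i; simp [hc]
    have hkey : ∀ m (β : Fin n →₀ ℕ), ¬ β ≤ c m → D m < ∑ i, β i := by
      intro m β hβ
      rw [Finsupp.le_def] at hβ
      push_neg at hβ
      obtain ⟨i, hi⟩ := hβ
      rw [hci m i] at hi
      have h6 : β i ≤ ∑ i', β i' :=
        Finset.single_le_sum (fun _ _ => Nat.zero_le _) (Finset.mem_univ i)
      omega
    have hbig : ∀ m (β : Fin n →₀ ℕ), ¬ β ≤ c m →
        π ^ (m + ((∑ i, β i) - 1) / j + 1) ∣ MvPowerSeries.coeff β z := by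
      intro m β hβ
      have hdb : D m < ∑ i, β i := hkey m β hβ
      have hNb : N m ≤ ∑ i, β i := le_trans (hND m) (le_of_lt hdb)
      exact root_dvd hπ (nat_root_bound' hj (by omega)) (hN m β hNb)
    refine ⟨fun m => ∑ α ∈ Finset.Iic (c m), MvPolynomial.monomial α (MvPowerSeries.coeff α z),
      ?_, ?_, ?_⟩
    · intro m
      rw [mem_Mjπ_iff hj π L hL Mjπ hMjπ]
      intro β
      rw [coeff_sum_monomial]
      split
      · rcases Nat.eq_zero_or_pos (∑ i, β i) with h0 | hpos
        · rw [h0]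
          have e0 : ((0 : ℕ) - 1) / j = 0 := by simp
          rw [e0, pow_zero]
          exact one_dvd _
        · have hroot : π ^ (((∑ i, β i) - 1) / j + 1) ∣ π * MvPowerSeries.coeff β z :=
            root_dvd hπ (nat_root_bound hj hpos) (hz1 β)
          rw [pow_succ'] at hroot
          exact (mul_dvd_mul_iff_left hπ.ne_zero).mp hroot
      · exact dvd_zero _
    · intro m m' hmm'
      rw [mem_smul_Mjπ_iff hj π L hL Mjπ hMjπ]
      intro β
      rw [MvPolynomial.coeff_sub, coeff_sum_monomial, coeff_sum_monomial]
      by_cases h1 : β ∈ Finset.Iic (c m)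
      · have h2 : β ∈ Finset.Iic (c m') := by
          rw [Finset.mem_Iic] at h1 ⊢
          refine le_trans h1 ?_
          rw [Finsupp.le_def]
          intro i
          rw [hci m i, hci m' i]
          exact hDmono m m' hmm'
        rw [if_pos h1, if_pos h2, sub_self]
        exact dvd_zero _
      · rw [if_neg h1]
        have hβ : ¬ β ≤ c m := by rwa [Finset.mem_Iic] at h1
        by_cases h2 : β ∈ Finset.Iic (c m')
        · rw [if_pos h2, sub_zero]
          exact (pow_dvd_pow π (Nat.le_succ _)).trans (hbig m β hβ)
        · rw [if_neg h2, sub_zero]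
          exact dvd_zero _
    · intro m β
      rw [Ideal.mem_span_singleton, coeff_sum_monomial]
      by_cases h1 : β ∈ Finset.Iic (c m)
      · rw [if_pos h1, sub_self]
        exact dvd_zero _
      · rw [if_neg h1, sub_zero]
        have hβ : ¬ β ≤ c m := by rwa [Finset.mem_Iic] at h1
        refine (pow_dvd_pow π ?_).trans (hbig m β hβ)
        generalize ((∑ i, β i) - 1) / j = K
        omega
end
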